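/- Let F be a forest with at least one edge and let r ≥ 2 be an integer. Then there exists an integer k such that Builder has a winning strategy in the deterministic F-avoidance game with r colors and tree size restriction k. -/

import Mathlib

open SimpleGraph Filter Asymptotics
open scoped Classical

/-- A history of the game: the sequence of edges presented so far, together with
the colors (elements of `Fin r`, representing the colors `1,…,r`) they received. -/
abbrev EdgeHistory (V : Type) (r : ℕ) := List (Sym2 V × Fin r)

/-- A Painter strategy on vertex type `V` with `r` colors: a function assigning a color
to every pair (history, new edge). -/
abbrev PainterStrategy (V : Type) (r : ℕ) := EdgeHistory V r → Sym2 V → Fin r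

/-- Auxiliary function: run a Painter strategy on a list of presented edges,
extending the given history. -/
def runPainterAux {V : Type} {r : ℕ} (π : PainterStrategy V r) :
    EdgeHistory V r → List (Sym2 V) → EdgeHistory V r
  | h, [] => h
  | h, e :: es => runPainterAux π (h ++ [(e, π h e)]) es

/-- The colored history obtained by coloring the edges of `l` successively
according to the Painter strategy `π`. -/
def runPainter {V : Type} {r : ℕ} (π : PainterStrategy V r) (l : List (Sym2 V)) :
    EdgeHistory V r :=
  runPainterAux π [] l

/-- `G` contains a copy of `F`, i.e. a subgraph isomorphic to `F`. -/
def IsCopy {α β : Type} (F : SimpleGraph α) (G : SimpleGraph β) : Prop :=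
  ∃ f : α ↪ β, ∀ u v : α, F.Adj u v → G.Adj (f u) (f v)

/-- The graph formed by the edges of color `c` in the history `h`. -/
def colorGraph {V : Type} {r : ℕ} (h : EdgeHistory V r) (c : Fin r) : SimpleGraph V :=
  SimpleGraph.fromEdgeSet {e | (e, c) ∈ h}

/-- The history `h` contains a monochromatic copy of `F`. -/
def HasMonoCopy {α V : Type} {r : ℕ} (F : SimpleGraph α) (h : EdgeHistory V r) : Prop :=
  ∃ c : Fin r, IsCopy F (colorGraph h c)

/-- The number of edges of `G` lying entirely within the vertex set `S`. -/
noncomputable def edgesWithin {V : Type} (G : SimpleGraph V) (S : Set V) : ℕ :=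
  (G.edgeSet ∩ {e | ∀ v ∈ e, v ∈ S}).ncard

/-- `m(G) ≤ d`: every subgraph `H` of `G` with at least one vertex satisfies `e_H ≤ d · v_H`. -/
def DensityLE {V : Type} (G : SimpleGraph V) (d : ℝ) : Prop :=
  ∀ S : Finset V, S.Nonempty → (edgesWithin G (↑S : Set V) : ℝ) ≤ d * (S.card : ℝ)

/-- `G` contains no cycle and every connected component of `G` has at most `k` edges
(equivalently, `G` is acyclic and contains no connected subgraph with more than `k` edges). -/
def TreeSizeLE {V : Type} (G : SimpleGraph V) (k : ℕ) : Prop :=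
  G.IsAcyclic ∧ ∀ S : Set V, (G.induce S).Connected → edgesWithin G S ≤ k

/-- A legal sequence of moves for Builder: distinct non-loop edges. -/
def ValidEdgeSeq {V : Type} (l : List (Sym2 V)) : Prop :=
  l.Nodup ∧ ∀ e ∈ l, ¬ e.IsDiag

/-- The (uncolored) board formed by a list of edges. -/
def boardOf {V : Type} (l : List (Sym2 V)) : SimpleGraph V :=
  SimpleGraph.fromEdgeSet {e | e ∈ l}

/-- Builder has a winning strategy in the deterministic `F`-avoidance game with `r` colors
and density restriction `d`. -/
def BuilderWinsDensity {α : Type} (F : SimpleGraph α) (r : ℕ) (d : ℝ) : Prop :=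
  ∃ a : ℕ, ∀ π : PainterStrategy (Fin a) r, ∃ l : List (Sym2 (Fin a)),
    ValidEdgeSeq l ∧ (∀ i : ℕ, DensityLE (boardOf (l.take i)) d) ∧
    HasMonoCopy F (runPainter π l)

/-- Builder has a winning strategy in the deterministic `F`-avoidance game with `r` colors
and tree size restriction `k`. -/
def BuilderWinsTree {α : Type} (F : SimpleGraph α) (r k : ℕ) : Prop :=
  ∃ a : ℕ, ∀ π : PainterStrategy (Fin a) r, ∃ l : List (Sym2 (Fin a)),
    ValidEdgeSeq l ∧ (∀ i : ℕ, TreeSizeLE (boardOf (l.take i)) k) ∧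
    HasMonoCopy F (runPainter π l)

/-- The Painter strategy `π` on `a` vertices never creates a monochromatic copy of `F`
against any Builder play obeying the tree size restriction `k`. -/
def PainterAvoidsTree {α : Type} (F : SimpleGraph α) (r k a : ℕ)
    (π : PainterStrategy (Fin a) r) : Prop :=
  ∀ l : List (Sym2 (Fin a)), ValidEdgeSeq l →
    (∀ i : ℕ, TreeSizeLE (boardOf (l.take i)) k) →
    ¬ HasMonoCopy F (runPainter π l)

/-- Painter has a winning strategy in the deterministic `F`-avoidance game with `r` colors
and tree size restriction `k`. -/
def PainterWinsTree {α : Type} (F : SimpleGraph α) (r k : ℕ) : Prop :=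
  ∀ a : ℕ, ∃ π : PainterStrategy (Fin a) r, PainterAvoidsTree F r k a π

/-- A sequence of `N` distinct non-loop edges on `n` vertices. -/
def ValidSeqFun {n N : ℕ} (f : Fin N → Sym2 (Fin n)) : Prop :=
  Function.Injective f ∧ ∀ i, ¬ (f i).IsDiag

/-- The probability (with respect to the uniformly random order in which the `N` distinct
edges of the random process on `n` vertices appear) of the event `P`. -/
noncomputable def onlineProb (n N : ℕ) (P : (Fin N → Sym2 (Fin n)) → Prop) : ℝ :=
  (Set.ncard {f : Fin N → Sym2 (Fin n) | ValidSeqFun f ∧ P f} : ℝ) /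
  (Set.ncard {f : Fin N → Sym2 (Fin n) | ValidSeqFun f} : ℝ)

/-- Event: playing the online strategy `π` on the random edge sequence `f` produces
a monochromatic copy of `F`. -/
def OnlineMonoCopy {α : Type} (F : SimpleGraph α) {r n N : ℕ}
    (π : PainterStrategy (Fin n) r) (f : Fin N → Sym2 (Fin n)) : Prop :=
  HasMonoCopy F (runPainter π (List.ofFn f))

namespace S17

variable {V : Type} [DecidableEq V] {r : ℕ}

theorem mem_runPainterAux (π : PainterStrategy V r) (l : List (Sym2 V)) :
    ∀ {h : EdgeHistory V r} {p}, p ∈ h → p ∈ runPainterAux π h l := by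
  induction l with
  | nil => intro h p hp; exact hp
  | cons e es ih =>
    intro h p hp
    show p ∈ runPainterAux π (h ++ [(e, π h e)]) es
    exact ih (List.mem_append_left _ hp)

theorem runPainterAux_append (π : PainterStrategy V r) (l₁ l₂ : List (Sym2 V)) :
    ∀ (h : EdgeHistory V r),
    runPainterAux π h (l₁ ++ l₂) = runPainterAux π (runPainterAux π h l₁) l₂ := by
  induction l₁ with
  | nil => intro h; rfl
  | cons e es ih => intro h; exact ih (h ++ [(e, π h e)])

theorem runPainter_snoc (π : PainterStrategy V r) (l : List (Sym2 V)) (e : Sym2 V) :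
    runPainter π (l ++ [e]) = runPainter π l ++ [(e, π (runPainter π l) e)] := by
  unfold runPainter
  rw [runPainterAux_append]
  rfl

theorem mem_runPainter_append (π : PainterStrategy V r) {l : List (Sym2 V)} {p}
    (l₂ : List (Sym2 V)) (hp : p ∈ runPainter π l) : p ∈ runPainter π (l ++ l₂) := by
  unfold runPainter at *
  rw [runPainterAux_append]
  exact mem_runPainterAux _ _ hp

theorem boardOf_adj {l : List (Sym2 V)} {u v : V} :
    (boardOf l).Adj u v ↔ s(u, v) ∈ l ∧ u ≠ v := by
  simp [boardOf, SimpleGraph.fromEdgeSet_adj]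

theorem boardOf_edge_mem {l : List (Sym2 V)} {e : Sym2 V}
    (h : e ∈ (boardOf l).edgeSet) : e ∈ l ∧ ¬ e.IsDiag := by
  rw [boardOf, SimpleGraph.edgeSet_fromEdgeSet] at h
  exact ⟨h.1, h.2⟩

theorem boardOf_nil_isAcyclic : (boardOf ([] : List (Sym2 V))).IsAcyclic := by
  intro v c hc
  cases c with
  | nil => simp at hc
  | cons h p => rw [boardOf_adj] at h; simp at h

theorem isAcyclic_snoc {l : List (Sym2 V)} {x y : V}
    (hac : (boardOf l).IsAcyclic) (hxy : x ≠ y)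
    (hreach : ¬ (boardOf l).Reachable x y) :
    (boardOf (l ++ [s(x, y)])).IsAcyclic := by
  intro v c hc
  by_cases he : s(x, y) ∈ c.edges
  · have := (SimpleGraph.adj_and_reachable_delete_edges_iff_exists_cycle
      (G := boardOf (l ++ [s(x, y)])) (v := x) (w := y)).mpr ⟨v, c, hc, he⟩
    apply hreach
    refine this.2.mono ?_
    intro a b hab
    have hab : _ ∧ ¬ (SimpleGraph.fromEdgeSet ({s(x, y)} : Set (Sym2 V))).Adj a b :=
      ⟨(SimpleGraph.deleteEdges_adj.mp hab).1, fun h' =>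
        (SimpleGraph.deleteEdges_adj.mp hab).2 ((SimpleGraph.fromEdgeSet_adj _).mp h').1⟩
    obtain ⟨hab1, hab2⟩ := hab
    rw [boardOf_adj] at hab1 ⊢
    refine ⟨?_, hab1.2⟩
    rcases List.mem_append.mp hab1.1 with h1 | h1
    · exact h1
    · exfalso
      apply hab2
      rw [SimpleGraph.fromEdgeSet_adj]
      simp only [Set.mem_singleton_iff]
      exact ⟨List.mem_singleton.mp h1, hab1.2⟩
  · have hsub : ∀ e ∈ c.edges, e ∈ (boardOf l).edgeSet := by
      intro e hme
      have h2 := boardOf_edge_mem (c.edges_subset_edgeSet hme)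
      rw [boardOf, SimpleGraph.edgeSet_fromEdgeSet]
      refine ⟨?_, h2.2⟩
      rcases List.mem_append.mp h2.1 with h1 | h1
      · exact h1
      · exact absurd (List.mem_singleton.mp h1 ▸ hme) he
    exact hac (c.transfer _ hsub) (hc.transfer hsub)

theorem reach_cluster {l : List (Sym2 V)} {P : Finset (Finset V)}
    (hcov : ∀ f ∈ l, ∃ S ∈ P, ∀ w ∈ f, w ∈ S)
    (hdisj : ∀ S ∈ P, ∀ T ∈ P, S ≠ T → Disjoint S T)
    {u v : V} (h : (boardOf l).Reachable u v) :
    u = v ∨ ∃ S ∈ P, u ∈ S ∧ v ∈ S := by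
  obtain ⟨w⟩ := h
  induction w with
  | nil => exact Or.inl rfl
  | @cons u u' v hadj p ih =>
    rw [boardOf_adj] at hadj
    obtain ⟨S', hS', hw⟩ := hcov _ hadj.1
    have huS : u ∈ S' := hw u (Sym2.mem_mk_left _ _)
    have hu'S : u' ∈ S' := hw u' (Sym2.mem_mk_right _ _)
    rcases ih with rfl | ⟨S, hS, hu'S2, hvS⟩
    · exact Or.inr ⟨S', hS', huS, hu'S⟩
    · right
      have : S' = S := by
        by_contra hne
        exact (Finset.disjoint_left.mp (hdisj _ hS' _ hS hne) hu'S) hu'S2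
      exact ⟨S', hS', huS, this ▸ hvS⟩

structure Inv (l : List (Sym2 V)) (P : Finset (Finset V)) : Prop where
  cover : ∀ f ∈ l, ∃ S ∈ P, ∀ w ∈ f, w ∈ S
  disj : ∀ S ∈ P, ∀ T ∈ P, S ≠ T → Disjoint S T
  nodup : l.Nodup
  nondiag : ∀ f ∈ l, ¬ f.IsDiag
  acy : ∀ i : ℕ, (boardOf (l.take i)).IsAcyclic

theorem Inv.nil : Inv ([] : List (Sym2 V)) ∅ := by
  refine ⟨by simp, by simp, by simp, by simp, ?_⟩
  intro i
  rw [List.take_nil]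
  exact boardOf_nil_isAcyclic

theorem Inv.acyFull {l : List (Sym2 V)} {P : Finset (Finset V)} (h : Inv l P) :
    (boardOf l).IsAcyclic := by
  have := h.acy l.length
  rwa [List.take_length] at this

theorem Inv.addEdge {l : List (Sym2 V)} {P : Finset (Finset V)} (h : Inv l P)
    {Sx Sy : Finset V} {x y : V}
    (hSx : Sx ∈ P) (hSy : Sy ∈ P) (hne : Sx ≠ Sy) (hx : x ∈ Sx) (hy : y ∈ Sy) :
    Inv (l ++ [s(x, y)]) (insert (Sx ∪ Sy) ((P.erase Sx).erase Sy)) := by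
  have hd : Disjoint Sx Sy := h.disj _ hSx _ hSy hne
  have hxy : x ≠ y := fun e => (Finset.disjoint_left.mp hd hx) (e ▸ hy)
  have hsame : ∀ {S}, S ∈ P → x ∈ S → y ∈ S → False := by
    intro S hS hxS hyS
    have : S = Sx := by
      by_contra h'
      exact (Finset.disjoint_left.mp (h.disj _ hS _ hSx h') hxS) hx
    subst this
    exact (Finset.disjoint_left.mp hd hyS) hy
  have hnotmem : s(x, y) ∉ l := by
    intro hmem
    obtain ⟨S, hS, hw⟩ := h.cover _ hmem
    exact hsame hS (hw x (Sym2.mem_mk_left _ _)) (hw y (Sym2.mem_mk_right _ _))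
  have hreach : ¬ (boardOf l).Reachable x y := by
    intro hr
    rcases reach_cluster h.cover h.disj hr with rfl | ⟨S, hS, hxS, hyS⟩
    · exact hxy rfl
    · exact hsame hS hxS hyS
  have hmem_erase : ∀ {T}, T ∈ (P.erase Sx).erase Sy → T ∈ P ∧ T ≠ Sx ∧ T ≠ Sy := by
    intro T hT
    rw [Finset.mem_erase, Finset.mem_erase] at hT
    exact ⟨hT.2.2, hT.2.1, hT.1⟩
  refine ⟨?_, ?_, ?_, ?_, ?_⟩
  · intro f hf
    rcases List.mem_append.mp hf with h1 | h1
    · obtain ⟨S, hS, hw⟩ := h.cover f h1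
      by_cases hSx' : S = Sx
      · exact ⟨Sx ∪ Sy, Finset.mem_insert_self _ _,
          fun w hw' => Finset.mem_union_left _ (hSx' ▸ hw w hw')⟩
      by_cases hSy' : S = Sy
      · exact ⟨Sx ∪ Sy, Finset.mem_insert_self _ _,
          fun w hw' => Finset.mem_union_right _ (hSy' ▸ hw w hw')⟩
      · refine ⟨S, Finset.mem_insert_of_mem ?_, hw⟩
        rw [Finset.mem_erase, Finset.mem_erase]
        exact ⟨hSy', hSx', hS⟩
    · rw [List.mem_singleton] at h1
      subst h1
      refine ⟨Sx ∪ Sy, Finset.mem_insert_self _ _, ?_⟩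
      intro w hw
      rcases Sym2.mem_iff.mp hw with rfl | rfl
      · exact Finset.mem_union_left _ hx
      · exact Finset.mem_union_right _ hy
  · intro S hS T hT hST
    have hdU : ∀ {T}, T ∈ (P.erase Sx).erase Sy → Disjoint (Sx ∪ Sy) T := by
      intro T hT
      obtain ⟨hTP, hTx, hTy⟩ := hmem_erase hT
      rw [Finset.disjoint_union_left]
      exact ⟨h.disj _ hSx _ hTP (Ne.symm hTx), h.disj _ hSy _ hTP (Ne.symm hTy)⟩
    rcases Finset.mem_insert.mp hS with rfl | hS' <;>
      rcases Finset.mem_insert.mp hT with h2 | hT'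
    · exact absurd h2.symm hST
    · exact hdU hT'
    · subst h2; exact (hdU hS').symm
    · exact h.disj _ (hmem_erase hS').1 _ (hmem_erase hT').1 hST
  · rw [List.nodup_append]
    exact ⟨h.nodup, List.nodup_singleton _, by
      intro a ha b hb hab
      rw [List.mem_singleton] at hb
      subst hb; subst hab; exact hnotmem ha⟩
  · intro f hf
    rcases List.mem_append.mp hf with h1 | h1
    · exact h.nondiag f h1
    · rw [List.mem_singleton] at h1
      subst h1
      rw [Sym2.mk_isDiag_iff]
      exact hxy
  · intro i
    by_cases hi : i ≤ l.length
    · rw [List.take_append_of_le_length hi]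
      exact h.acy i
    · rw [List.take_of_length_le (by simp; omega)]
      exact isAcyclic_snoc h.acyFull hxy hreach

theorem Inv.addSingleton {l : List (Sym2 V)} {P : Finset (Finset V)} (h : Inv l P)
    {z : V} (hz : ∀ S ∈ P, z ∉ S) : Inv l (insert {z} P) := by
  refine ⟨?_, ?_, h.nodup, h.nondiag, h.acy⟩
  · intro f hf
    obtain ⟨S, hS, hw⟩ := h.cover f hf
    exact ⟨S, Finset.mem_insert_of_mem hS, hw⟩
  · intro S hS T hT hST
    rcases Finset.mem_insert.mp hS with rfl | hS' <;>
      rcases Finset.mem_insert.mp hT with h2 | hT'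
    · exact absurd h2.symm hST
    · rw [Finset.disjoint_singleton_left]
      exact hz _ hT'
    · subst h2
      rw [Finset.disjoint_singleton_right]
      exact hz _ hS'
    · exact h.disj _ hS' _ hT' hST



/-- vertices of the uniform `b`-ary tree of depth `d` -/
def TB (b d : ℕ) := {l : List (Fin b) // l.length ≤ d}

def Cert (b : ℕ) (h : EdgeHistory V r) (c : Fin r) (x : V) (S : Finset V) (d : ℕ) : Prop :=
  ∃ g : TB b d → V, Function.Injective g ∧ g ⟨[], Nat.zero_le d⟩ = x ∧ (∀ l, g l ∈ S) ∧
    ∀ (l : List (Fin b)) (hl : l.length < d) (i : Fin b),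
      (s(g ⟨l, Nat.le_of_lt hl⟩,
         g ⟨l ++ [i], by rw [List.length_append, List.length_singleton]; exact hl⟩), c) ∈ h

theorem Cert.mono_h {b : ℕ} {h h' : EdgeHistory V r} {c x S d}
    (hC : Cert b h c x S d) (hm : ∀ p ∈ h, p ∈ h') : Cert b h' c x S d := by
  obtain ⟨g, h1, h2, h3, h4⟩ := hC
  exact ⟨g, h1, h2, h3, fun l hl i => hm _ (h4 l hl i)⟩

theorem Cert.mono_S {b : ℕ} {h : EdgeHistory V r} {c x} {S S' : Finset V} {d}
    (hC : Cert b h c x S d) (hm : S ⊆ S') : Cert b h c x S' d := by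
  obtain ⟨g, h1, h2, h3, h4⟩ := hC
  exact ⟨g, h1, h2, fun l => hm (h3 l), h4⟩

theorem Cert.anti_d {b : ℕ} {h : EdgeHistory V r} {c x S} {d d' : ℕ}
    (hC : Cert b h c x S d) (hd : d' ≤ d) : Cert b h c x S d' := by
  obtain ⟨g, h1, h2, h3, h4⟩ := hC
  refine ⟨fun l => g ⟨l.1, le_trans l.2 hd⟩, ?_, h2, fun l => h3 _, ?_⟩
  · intro a b hab
    have h5 := h1 hab
    replace h5 := congrArg Subtype.val h5
    exact Subtype.ext h5
  · intro l hl i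
    exact h4 l (lt_of_lt_of_le hl hd) i

theorem Cert.zero {b : ℕ} {h : EdgeHistory V r} {c : Fin r} {x : V} {S : Finset V}
    (hx : x ∈ S) : Cert b h c x S 0 := by
  refine ⟨fun _ => x, ?_, rfl, fun _ => hx, ?_⟩
  · intro a b _
    apply Subtype.ext
    rw [List.length_eq_zero_iff.mp (Nat.le_zero.mp a.2), List.length_eq_zero_iff.mp (Nat.le_zero.mp b.2)]
  · intro l hl i
    exact absurd hl (Nat.not_lt_zero _)

theorem Cert.combine {b : ℕ} {h : EdgeHistory V r} {c : Fin r} {y : V} {d : ℕ}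
    {xs : Fin b → V} {Ss : Fin b → Finset V} {U : Finset V}
    (hy : y ∈ U) (hUS : ∀ j, Ss j ⊆ U)
    (hdisj : ∀ j j', j ≠ j' → Disjoint (Ss j) (Ss j'))
    (hynot : ∀ j, y ∉ Ss j)
    (hcert : ∀ j, Cert b h c (xs j) (Ss j) d)
    (hedges : ∀ j, (s(y, xs j), c) ∈ h) :
    Cert b h c y U (d + 1) := by
  choose g hinj hroot hmem hedge using hcert
  have hlen : ∀ {i : Fin b} {l' : List (Fin b)}, (i :: l' : List (Fin b)).length ≤ d + 1 →
      l'.length ≤ d := by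
    intro i l' hl
    rw [List.length_cons] at hl
    omega
  refine ⟨fun l => match l with
    | ⟨[], _⟩ => y
    | ⟨i :: l', hl⟩ => g i ⟨l', hlen hl⟩, ?_, rfl, ?_, ?_⟩
  · rintro ⟨l₁, h₁⟩ ⟨l₂, h₂⟩ heq
    cases l₁ with
    | nil =>
      cases l₂ with
      | nil => rfl
      | cons i l' =>
        have heq' : y = g i ⟨l', hlen h₂⟩ := heq
        exact absurd (heq' ▸ hmem i ⟨l', hlen h₂⟩) (hynot i)
    | cons i l' =>
      cases l₂ with
      | nil =>
        have heq' : g i ⟨l', hlen h₁⟩ = y := heq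
        exact absurd (heq' ▸ hmem i ⟨l', hlen h₁⟩) (hynot i)
      | cons i' l'' =>
        have heq' : g i ⟨l', hlen h₁⟩ = g i' ⟨l'', hlen h₂⟩ := heq
        by_cases hii : i = i'
        · subst hii
          have h5 := hinj i heq'
          replace h5 : l' = l'' := congrArg Subtype.val h5
          subst h5
          rfl
        · exfalso
          have m1 := hmem i ⟨l', hlen h₁⟩
          have m2 := hmem i' ⟨l'', hlen h₂⟩
          rw [heq'] at m1
          exact (Finset.disjoint_left.mp (hdisj i i' hii) m1) m2
  · rintro ⟨l, hl⟩
    cases l with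
    | nil => exact hy
    | cons i l' => exact hUS i (hmem i _)
  · intro l hl i
    cases l with
    | nil =>
      show (s(y, g i ⟨[], Nat.zero_le d⟩), c) ∈ h
      rw [hroot i]
      exact hedges i
    | cons j l' =>
      have hl' : l'.length < d := by
        rw [List.length_cons] at hl
        omega
      exact hedge j l' hl' i



theorem exists_le_sum_eq {r : ℕ} (m : ℕ) (v : Fin r → ℕ) (hv : m ≤ ∑ c, v c) :
    ∃ v' : Fin r → ℕ, (∀ c, v' c ≤ v c) ∧ ∑ c, v' c = m := by
  obtain ⟨D, hD⟩ : ∃ D, ∑ c, v c = m + D := ⟨∑ c, v c - m, by omega⟩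
  clear hv
  induction D generalizing v with
  | zero => exact ⟨v, fun _ => le_rfl, by omega⟩
  | succ D ih =>
    have hex : ∃ c, v c ≠ 0 := by
      by_contra h'
      push_neg at h'
      simp only [h'] at hD
      simp at hD
    obtain ⟨c0, hc0⟩ := hex
    have hsum : ∑ c, Function.update v c0 (v c0 - 1) c = m + D := by
      rw [Finset.sum_update_of_mem (Finset.mem_univ c0)]
      have h2 : ∑ c, v c = v c0 + ∑ c ∈ Finset.univ \ {c0}, v c := by
        rw [Finset.sdiff_singleton_eq_erase, Finset.add_sum_erase _ _ (Finset.mem_univ c0)]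
      omega
    obtain ⟨v', hle, hs⟩ := ih _ hsum
    refine ⟨v', fun c => le_trans (hle c) ?_, hs⟩
    by_cases hc : c = c0
    · subst hc
      rw [Function.update_self]
      omega
    · rw [Function.update_of_ne hc]

theorem select_fiber {M q : ℕ} {β : Type} [Fintype β] [DecidableEq β] [Nonempty β]
    (f : Fin M → β) (hM : Fintype.card β * q ≤ M) :
    ∃ (y : β) (e : Fin q → Fin M), Function.Injective e ∧ ∀ j, f (e j) = y := by
  obtain ⟨y, -, hy⟩ := Finset.exists_le_card_fiber_of_mul_le_card_of_maps_to
    (s := (Finset.univ : Finset (Fin M))) (t := (Finset.univ : Finset β)) (f := f)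
    (fun a _ => Finset.mem_univ _) Finset.univ_nonempty (by simpa using hM)
  obtain ⟨F', hsub, hq⟩ := Finset.exists_subset_card_eq hy
  refine ⟨y, fun j => (F'.orderIsoOfFin hq j : Fin M), ?_, ?_⟩
  · intro a b hab
    have := Subtype.ext hab
    exact (F'.orderIsoOfFin hq).injective this
  · intro j
    have := hsub (F'.orderIsoOfFin hq j).2
    rw [Finset.mem_filter] at this
    exact this.2



/-! ### The Builder strategy: state invariant game lemmas -/

def VC {V : Type} {r : ℕ} (b : ℕ) (h : EdgeHistory V r) (P : Finset (Finset V))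
    (S : Finset V) (x : V) (v : Fin r → ℕ) : Prop :=
  S ∈ P ∧ x ∈ S ∧ ∀ c, Cert b h c x S (v c)

theorem VC.mono {V : Type} {r b : ℕ} {h h' : EdgeHistory V r} {P P' : Finset (Finset V)}
    {S : Finset V} {x : V} {v : Fin r → ℕ} (hvc : VC b h P S x v)
    (hm : ∀ p ∈ h, p ∈ h') (hP : P ⊆ P') : VC b h' P' S x v :=
  ⟨hP hvc.1, hvc.2.1, fun c => (hvc.2.2 c).mono_h hm⟩

theorem attach {r a : ℕ} (π : PainterStrategy (Fin a) r) (y : Fin a) :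
    ∀ (n : ℕ) (l : List (Sym2 (Fin a))) (P : Finset (Finset (Fin a)))
      (Ty : Finset (Fin a)) (xs : Fin n → Fin a) (Ts : Fin n → Finset (Fin a)),
      Inv l P → Ty ∈ P → y ∈ Ty → (∀ j, Ts j ∈ P) → (∀ j, xs j ∈ Ts j) →
      (∀ j, Ts j ≠ Ty) → (∀ j j', j ≠ j' → Ts j ≠ Ts j') →
      ∃ (ext : List (Sym2 (Fin a))) (col : Fin n → Fin r) (P' : Finset (Finset (Fin a))),
        Inv (l ++ ext) P' ∧
        (Ty ∪ Finset.univ.biUnion Ts) ∈ P' ∧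
        (∀ T ∈ P, T ≠ Ty → (∀ j, T ≠ Ts j) → T ∈ P') ∧
        (∀ T ∈ P', T ∈ P ∨ T = Ty ∪ Finset.univ.biUnion Ts) ∧
        (∀ p ∈ runPainter π l, p ∈ runPainter π (l ++ ext)) ∧
        (∀ j, (s(y, xs j), col j) ∈ runPainter π (l ++ ext)) := by
  intro n
  induction n with
  | zero =>
    intro l P Ty xs Ts hInv hTy hyTy _ _ _ _
    have hU : Ty ∪ Finset.univ.biUnion Ts = Ty := by
      rw [Finset.univ_eq_empty, Finset.biUnion_empty, Finset.union_empty]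
    rw [hU]
    exact ⟨[], Fin.elim0, P, by simpa using hInv, hTy, fun T hT _ _ => hT,
      fun T hT => Or.inl hT, by simp, fun j => j.elim0⟩
  | succ n ih =>
    intro l P Ty xs Ts hInv hTy hyTy hTs hxs hTsTy hTsne
    have hTyne : Ty ≠ Ts 0 := Ne.symm (hTsTy 0)
    have hInv₁ : Inv (l ++ [s(y, xs 0)]) (insert (Ty ∪ Ts 0) ((P.erase Ty).erase (Ts 0))) :=
      hInv.addEdge hTy (hTs 0) hTyne hyTy (hxs 0)
    have hTsinP₁ : ∀ j : Fin n, Ts j.succ ∈ insert (Ty ∪ Ts 0) ((P.erase Ty).erase (Ts 0)) := by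
      intro j
      apply Finset.mem_insert_of_mem
      rw [Finset.mem_erase, Finset.mem_erase]
      exact ⟨hTsne _ _ (Fin.succ_ne_zero j), hTsTy _, hTs _⟩
    have hTsneU : ∀ j : Fin n, Ts j.succ ≠ Ty ∪ Ts 0 := by
      intro j heq
      have h1 : xs 0 ∈ Ts j.succ := by
        rw [heq]
        exact Finset.mem_union_right _ (hxs 0)
      exact (Finset.disjoint_left.mp
        (hInv.disj _ (hTs j.succ) _ (hTs 0) (hTsne _ _ (Fin.succ_ne_zero j))) h1) (hxs 0)
    obtain ⟨ext₁, col₁, P₂, h1, h2, h3, h4, h5, h6⟩ :=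
      ih (l ++ [s(y, xs 0)]) (insert (Ty ∪ Ts 0) ((P.erase Ty).erase (Ts 0))) (Ty ∪ Ts 0)
        (fun j => xs j.succ) (fun j => Ts j.succ)
        hInv₁ (Finset.mem_insert_self _ _) (Finset.mem_union_left _ hyTy)
        hTsinP₁ (fun j => hxs j.succ) hTsneU
        (fun j j' hjj' => hTsne _ _ (fun h => hjj' (Fin.succ_injective _ h)))
    have hUeq : (Ty ∪ Ts 0) ∪ Finset.univ.biUnion (fun j : Fin n => Ts j.succ)
        = Ty ∪ Finset.univ.biUnion Ts := by
      ext z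
      simp only [Finset.mem_union, Finset.mem_biUnion, Finset.mem_univ, true_and]
      rw [Fin.exists_fin_succ]
      tauto
    have hass : (l ++ [s(y, xs 0)]) ++ ext₁ = l ++ (s(y, xs 0) :: ext₁) := by simp
    rw [hUeq] at h2
    rw [hass] at h1 h5 h6
    have hcol₀ : (s(y, xs 0), π (runPainter π l) s(y, xs 0)) ∈
        runPainter π (l ++ (s(y, xs 0) :: ext₁)) := by
      apply h5
      rw [runPainter_snoc]
      exact List.mem_append_right _ (List.mem_singleton.mpr rfl)
    refine ⟨s(y, xs 0) :: ext₁, Fin.cons (π (runPainter π l) s(y, xs 0)) col₁, P₂,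
      h1, h2, ?_, ?_, ?_, ?_⟩
    · intro T hT hTne hTnTs
      refine h3 T ?_ ?_ ?_
      · apply Finset.mem_insert_of_mem
        rw [Finset.mem_erase, Finset.mem_erase]
        exact ⟨hTnTs 0, hTne, hT⟩
      · intro heq
        have h1' : xs 0 ∈ T := by
          rw [heq]
          exact Finset.mem_union_right _ (hxs 0)
        exact (Finset.disjoint_left.mp
          (hInv.disj _ hT _ (hTs 0) (hTnTs 0)) h1') (hxs 0)
      · intro j
        exact hTnTs j.succ
    · intro T hT
      rcases h4 T hT with hTP₁ | hTU
      · rcases Finset.mem_insert.mp hTP₁ with hTeq | hTer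
        · -- T = Ty ∪ Ts 0 : must coincide with the full union
          by_cases hTfin : T = Ty ∪ Finset.univ.biUnion Ts
          · exact Or.inr hTfin
          · exfalso
            have hyT : y ∈ T := by
              rw [hTeq]
              exact Finset.mem_union_left _ hyTy
            have hyU : y ∈ Ty ∪ Finset.univ.biUnion Ts := Finset.mem_union_left _ hyTy
            exact (Finset.disjoint_left.mp (h1.disj _ hT _ h2 hTfin) hyT) hyU
        · rw [Finset.mem_erase, Finset.mem_erase] at hTer
          exact Or.inl hTer.2.2
      · rw [hUeq] at hTU
        exact Or.inr hTU
    · intro p hp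
      exact h5 _ (mem_runPainter_append π _ hp)
    · intro j
      refine Fin.cases ?_ ?_ j
      · rw [Fin.cons_zero]
        exact hcol₀
      · intro j'
        rw [Fin.cons_succ]
        exact h6 j'

def Qs (r b m N : ℕ) : Prop :=
  ∃ s : ℕ, ∀ (a : ℕ) (π : PainterStrategy (Fin a) r) (cur : List (Sym2 (Fin a)))
    (P : Finset (Finset (Fin a))) (Fr : Finset (Fin a)),
    Inv cur P → (∀ T ∈ P, Disjoint Fr T) → s ≤ Fr.card →
    ∃ (ext : List (Sym2 (Fin a))) (P' : Finset (Finset (Fin a))) (Fr' : Finset (Fin a))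
      (v : Fin N → Fin r → ℕ) (x : Fin N → Fin a) (S : Fin N → Finset (Fin a)),
      Inv (cur ++ ext) P' ∧ P ⊆ P' ∧ Fr' ⊆ Fr ∧ (∀ T ∈ P', Disjoint Fr' T) ∧
      Fr.card ≤ Fr'.card + s ∧ (∀ j, m ≤ ∑ c, v j c) ∧ (∀ j, S j ⊆ Fr) ∧
      (∀ j, VC b (runPainter π (cur ++ ext)) P' (S j) (x j) (v j)) ∧
      (∀ j j', j ≠ j' → S j ≠ S j')

theorem qsingle0 (r b : ℕ) : Qs r b 0 1 := by
  refine ⟨1, ?_⟩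
  intro a π cur P Fr hInv hF hcard
  have hFrne : Fr.Nonempty := Finset.card_pos.mp (by omega)
  obtain ⟨z, hz⟩ := hFrne
  have hznot : ∀ T ∈ P, z ∉ T := fun T hT hzT =>
    (Finset.disjoint_left.mp (hF T hT) hz) hzT
  refine ⟨[], insert {z} P, Fr.erase z, fun _ _ => 0, fun _ => z, fun _ => {z},
    by simpa using hInv.addSingleton hznot, Finset.subset_insert _ _,
    Finset.erase_subset _ _, ?_, ?_, fun j => by simp, ?_, ?_, ?_⟩
  · intro T hT
    rcases Finset.mem_insert.mp hT with rfl | hT'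
    · rw [Finset.disjoint_singleton_right]
      exact Finset.notMem_erase _ _
    · exact Finset.disjoint_of_subset_left (Finset.erase_subset _ _) (hF T hT')
  · rw [Finset.card_erase_of_mem hz]
    omega
  · intro j
    rw [Finset.singleton_subset_iff]
    exact hz
  · intro j
    exact ⟨Finset.mem_insert_self _ _, Finset.mem_singleton_self _,
      fun c => Cert.zero (Finset.mem_singleton_self _)⟩
  · intro j j' hjj'
    exact absurd (Subsingleton.elim j j') hjj'

theorem qmany {r b m : ℕ} (h1 : Qs r b m 1) : ∀ N, Qs r b m N := by
  intro N
  induction N with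
  | zero =>
    refine ⟨0, ?_⟩
    intro a π cur P Fr hInv hF _
    exact ⟨[], P, Fr, Fin.elim0, Fin.elim0, Fin.elim0, by simpa using hInv,
      subset_rfl, subset_rfl, hF, by omega, fun j => j.elim0, fun j => j.elim0,
      fun j => j.elim0, fun j => j.elim0⟩
  | succ N ihN =>
    obtain ⟨s₁, hs₁⟩ := ihN
    obtain ⟨s₂, hs₂⟩ := h1
    refine ⟨s₁ + s₂, ?_⟩
    intro a π cur P Fr hInv hF hcard
    obtain ⟨ext, P', Fr', v, x, S, hInv', hPP', hFr'F, hdisj', hcard', hsum, hSF, hVC, hSne⟩ :=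
      hs₁ a π cur P Fr hInv hF (by omega)
    obtain ⟨ext₂, P'', Fr'', v₂, x₂, S₂, hInv'', hP'P'', hFr''F', hdisj'', hcard'', hsum₂,
        hSF₂, hVC₂, -⟩ :=
      hs₂ a π (cur ++ ext) P' Fr' hInv' hdisj' (by omega)
    have hass : (cur ++ ext) ++ ext₂ = cur ++ (ext ++ ext₂) := List.append_assoc _ _ _
    rw [hass] at hInv'' hVC₂
    have hmono : ∀ p ∈ runPainter π (cur ++ ext), p ∈ runPainter π (cur ++ (ext ++ ext₂)) := by
      intro p hp
      rw [← hass]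
      exact mem_runPainter_append π _ hp
    refine ⟨ext ++ ext₂, P'', Fr'', Fin.cons (v₂ 0) v, Fin.cons (x₂ 0) x, Fin.cons (S₂ 0) S,
      hInv'', hPP'.trans hP'P'', hFr''F'.trans hFr'F, hdisj'', by omega, ?_, ?_, ?_, ?_⟩
    · intro j
      refine Fin.cases ?_ ?_ j
      · rw [Fin.cons_zero]; exact hsum₂ 0
      · intro j'; rw [Fin.cons_succ]; exact hsum j'
    · intro j
      refine Fin.cases ?_ ?_ j
      · rw [Fin.cons_zero]; exact (hSF₂ 0).trans hFr'F
      · intro j'; rw [Fin.cons_succ]; exact hSF j'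
    · intro j
      refine Fin.cases ?_ ?_ j
      · rw [Fin.cons_zero, Fin.cons_zero]; exact hVC₂ 0
      · intro j'
        rw [Fin.cons_succ, Fin.cons_succ, Fin.cons_succ]
        exact (hVC j').mono hmono hP'P''
    · intro j j' hjj'
      have key : ∀ j'' : Fin N, S₂ 0 ≠ S j'' := by
        intro j'' heq
        have hx2 : x₂ 0 ∈ Fr' := hSF₂ 0 (hVC₂ 0).2.1
        have hx2' : x₂ 0 ∈ S j'' := by rw [← heq]; exact (hVC₂ 0).2.1
        exact (Finset.disjoint_left.mp (hdisj' _ (hVC j'').1) hx2) hx2'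
      rcases Fin.eq_zero_or_eq_succ j with rfl | ⟨i, rfl⟩ <;>
        rcases Fin.eq_zero_or_eq_succ j' with rfl | ⟨i', rfl⟩
      · exact absurd rfl hjj'
      · rw [Fin.cons_zero, Fin.cons_succ]
        exact key i'
      · rw [Fin.cons_zero, Fin.cons_succ]
        exact fun h => (key i) h.symm
      · rw [Fin.cons_succ, Fin.cons_succ]
        exact hSne i i' (fun h => hjj' (congrArg Fin.succ h))


theorem qone {r b m : ℕ} (hr : 0 < r) (IH : ∀ N, Qs r b m N) : Qs r b (m + 1) 1 := by
  haveI : Nonempty (Fin r) := ⟨⟨0, hr⟩⟩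
  obtain ⟨s₀, hs₀⟩ := IH (Fintype.card (Fin r → Fin (m + 1)) * (r * b + 1))
  refine ⟨s₀, ?_⟩
  intro a π cur P Fr hInv hF hcard
  obtain ⟨ext, P', Fr', v, x, S, hInv', hPP', hFr'F, hdisj', hcard', hsum, hSF, hVC, hSne⟩ :=
    hs₀ a π cur P Fr hInv hF hcard
  -- normalize the vectors so that they take values in `Fin (m+1)` and sum to exactly `m`
  have hnorm : ∀ j, ∃ v' : Fin r → ℕ, (∀ c, v' c ≤ v j c) ∧ ∑ c, v' c = m :=
    fun j => exists_le_sum_eq m (v j) (hsum j)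
  choose vN hvle hvsum using hnorm
  have hvlt : ∀ j c, vN j c < m + 1 := by
    intro j c
    have h1 : vN j c ≤ ∑ c', vN j c' :=
      Finset.single_le_sum (fun i _ => Nat.zero_le _) (Finset.mem_univ c)
    have h2 := hvsum j
    omega
  -- pigeonhole: many indices with a common normalized vector
  obtain ⟨yv, e, he_inj, he_eq⟩ := select_fiber
    (fun j c => (⟨vN j c, hvlt j c⟩ : Fin (m + 1))) le_rfl
  set vstar : Fin r → ℕ := fun c => (yv c : ℕ) with hvstar
  have hveq : ∀ j c, vN (e j) c = vstar c := by
    intro j c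
    have := congrFun (he_eq j) c
    exact congrArg Fin.val this
  have hvsle : ∀ j c, vstar c ≤ v (e j) c := fun j c => hveq j c ▸ hvle (e j) c
  -- the designated center y and its cluster, and the r*b many pool clusters
  have hene : ∀ (u u' : Fin (r * b + 1)), u ≠ u' → S (e u) ≠ S (e u') :=
    fun u u' h => hSne _ _ (fun h' => h (he_inj h'))
  have hTsTy : ∀ j : Fin (r * b), S (e j.succ) ≠ S (e 0) :=
    fun j => hene _ _ (Fin.succ_ne_zero j)
  obtain ⟨ext₂, col, P'', hInv'', hUin, hkeep, hout, hmono, hcols⟩ :=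
    attach π (x (e 0)) (r * b) (cur ++ ext) P' (S (e 0))
      (fun j => x (e j.succ)) (fun j => S (e j.succ))
      hInv' (hVC (e 0)).1 (hVC (e 0)).2.1
      (fun j => (hVC _).1) (fun j => (hVC _).2.1) hTsTy
      (fun j j' h => hene _ _ (fun h' => h (Fin.succ_injective _ h')))
  -- pigeonhole on the colors of the new edges
  obtain ⟨c, sel, hsel_inj, hsel_eq⟩ := select_fiber (β := Fin r) (q := b) col
    (by rw [Fintype.card_fin])
  -- the new certificate in color c at the center
  have hUtot : (x (e 0)) ∈ S (e 0) ∪ Finset.univ.biUnion (fun j : Fin (r * b) => S (e j.succ)) :=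
    Finset.mem_union_left _ (hVC (e 0)).2.1
  have hcert_c : Cert b (runPainter π ((cur ++ ext) ++ ext₂)) c (x (e 0))
      (S (e 0) ∪ Finset.univ.biUnion (fun j : Fin (r * b) => S (e j.succ))) (vstar c + 1) := by
    refine Cert.combine (xs := fun i => x (e (sel i).succ))
      (Ss := fun i => S (e (sel i).succ)) hUtot ?_ ?_ ?_ ?_ ?_
    · intro i z hz
      exact Finset.mem_union_right _ (Finset.mem_biUnion.mpr ⟨sel i, Finset.mem_univ _, hz⟩)
    · intro i i' hii
      refine hInv'.disj _ (hVC _).1 _ (hVC _).1 ?_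
      exact hene _ _ (fun h => hii (hsel_inj (Fin.succ_injective _ h)))
    · intro i hyi
      have hyTy : x (e 0) ∈ S (e 0) := (hVC (e 0)).2.1
      exact (Finset.disjoint_left.mp
        (hInv'.disj _ (hVC (e (sel i).succ)).1 _ (hVC (e 0)).1 (hTsTy (sel i))) hyi) hyTy
    · intro i
      exact (((hVC (e (sel i).succ)).2.2 c).anti_d (hvsle _ c)).mono_h hmono
    · intro i
      have := hcols (sel i)
      rwa [hsel_eq i] at this
  -- certificates in the other colors survive
  have hcerts : ∀ c', Cert b (runPainter π ((cur ++ ext) ++ ext₂)) c' (x (e 0))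
      (S (e 0) ∪ Finset.univ.biUnion (fun j : Fin (r * b) => S (e j.succ)))
      (Function.update vstar c (vstar c + 1) c') := by
    intro c'
    by_cases hc' : c' = c
    · subst hc'
      rw [Function.update_self]
      exact hcert_c
    · rw [Function.update_of_ne hc']
      exact ((((hVC (e 0)).2.2 c').anti_d (hvsle 0 c')).mono_S
        Finset.subset_union_left).mono_h hmono
  have hsumfin : m + 1 ≤ ∑ c', Function.update vstar c (vstar c + 1) c' := by
    have h1 : ∑ c', Function.update vstar c (vstar c + 1) c'
        = (vstar c + 1) + ∑ c' ∈ Finset.univ \ {c}, vstar c' :=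
      Finset.sum_update_of_mem (Finset.mem_univ c) vstar (vstar c + 1)
    have h2 : ∑ c', vstar c' = vstar c + ∑ c' ∈ Finset.univ \ {c}, vstar c' := by
      rw [Finset.sdiff_singleton_eq_erase, Finset.add_sum_erase _ _ (Finset.mem_univ c)]
    have h3 : ∑ c', vstar c' = m := by
      rw [← hvsum (e 0)]
      exact Finset.sum_congr rfl (fun c' _ => (hveq 0 c').symm)
    omega
  have hass : (cur ++ ext) ++ ext₂ = cur ++ (ext ++ ext₂) := List.append_assoc _ _ _
  rw [hass] at hInv'' hcerts
  refine ⟨ext ++ ext₂, P'', Fr', fun _ => Function.update vstar c (vstar c + 1),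
    fun _ => x (e 0),
    fun _ => S (e 0) ∪ Finset.univ.biUnion (fun j : Fin (r * b) => S (e j.succ)),
    hInv'', ?_, hFr'F, ?_, hcard', fun _ => hsumfin, ?_, ?_, ?_⟩
  · -- P ⊆ P''
    intro T hT
    have hdT : Disjoint Fr T := hF T hT
    refine hkeep T (hPP' hT) ?_ (fun j => ?_)
    · intro heq
      exact (Finset.disjoint_left.mp hdT (hSF (e 0) (hVC (e 0)).2.1))
        (heq ▸ (hVC (e 0)).2.1)
    · intro heq
      exact (Finset.disjoint_left.mp hdT (hSF (e j.succ) (hVC (e j.succ)).2.1))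
        (heq ▸ (hVC (e j.succ)).2.1)
  · -- Fr' disjoint from all clusters of P''
    intro T hT
    rcases hout T hT with hTP' | rfl
    · exact hdisj' T hTP'
    · rw [Finset.disjoint_union_right]
      refine ⟨hdisj' _ (hVC (e 0)).1, ?_⟩
      rw [Finset.disjoint_biUnion_right]
      exact fun j _ => hdisj' _ (hVC (e j.succ)).1
  · -- new cluster is inside Fr
    intro j
    exact Finset.union_subset (hSF _) (Finset.biUnion_subset.mpr fun j' _ => hSF _)
  · -- the vertex certificate
    intro j
    exact ⟨hUin, hUtot, hcerts⟩
  · intro j j' hjj'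
    exact absurd (Subsingleton.elim j j') hjj'

theorem qall {r b : ℕ} (hr : 0 < r) : ∀ m N, Qs r b m N := by
  intro m
  induction m with
  | zero => exact qmany (qsingle0 r b)
  | succ m ih => exact qmany (qone hr ih)


/-! ### Embedding a forest into the uniform tree certificate -/

theorem support_getLast? {W : Type} {G : SimpleGraph W} :
    ∀ {u v : W} (p : G.Walk u v), p.support.getLast? = some v := by
  intro u v p
  induction p with
  | nil => rfl
  | @cons u u' v h q ih =>
    rw [SimpleGraph.Walk.support_cons]
    rw [SimpleGraph.Walk.support_eq_cons q]
    rw [List.getLast?_cons_cons]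
    rw [← SimpleGraph.Walk.support_eq_cons q]
    exact ih

theorem embed_of_cert {α : Type} [Fintype α] {F : SimpleGraph α} (hforest : F.IsAcyclic)
    {V : Type} {r : ℕ} {h : EdgeHistory V r} {c : Fin r} {x : V} {S : Finset V}
    (hc : Cert (Fintype.card α) h c x S (Fintype.card α)) :
    ∃ f : α ↪ V, ∀ u w : α, F.Adj u w → (s(f u, f w), c) ∈ h ∧ f u ≠ f w := by
  classical
  set t := Fintype.card α with ht
  obtain ⟨g, ginj, groot, gmem, gedge⟩ := hc
  let idx : α ≃ Fin t := Fintype.equivFin α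
  set C : α → Finset α := fun z => Finset.univ.filter (fun w => F.Reachable z w) with hC
  have hCmem : ∀ z, z ∈ C z := by
    intro z
    simp only [hC, Finset.mem_filter, Finset.mem_univ, true_and]
    exact SimpleGraph.Reachable.refl z
  have hCne : ∀ z, ((C z).image idx).Nonempty :=
    fun z => ⟨idx z, Finset.mem_image_of_mem _ (hCmem z)⟩
  set root : α → α := fun z => idx.symm (((C z).image idx).min' (hCne z)) with hroot
  have hmin'_congr : ∀ (s₁ s₂ : Finset (Fin t)) (hs₁ : s₁.Nonempty) (hs₂ : s₂.Nonempty),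
      s₁ = s₂ → s₁.min' hs₁ = s₂.min' hs₂ := by
    rintro s₁ s₂ hs₁ hs₂ rfl
    rfl
  have hrootC : ∀ z, root z ∈ C z := by
    intro z
    have hm := Finset.min'_mem ((C z).image idx) (hCne z)
    obtain ⟨w, hw, hww⟩ := Finset.mem_image.mp hm
    have heq : root z = w := by
      simp only [hroot]
      rw [← hww]
      exact idx.symm_apply_apply w
    rw [heq]
    exact hw
  have hrootr : ∀ z, F.Reachable z (root z) := by
    intro z
    have := hrootC z
    simp only [hC, Finset.mem_filter, Finset.mem_univ, true_and] at this
    exact this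
  have hrooteq : ∀ {z z' : α}, F.Reachable z z' → root z = root z' := by
    intro z z' hzz
    have hCeq : C z = C z' := by
      ext w
      simp only [hC, Finset.mem_filter, Finset.mem_univ, true_and]
      exact ⟨fun hw => hzz.symm.trans hw, fun hw => hzz.trans hw⟩
    simp only [hroot]
    congr 1
    refine hmin'_congr _ _ _ _ ?_
    rw [hCeq]
  set p : ∀ z : α, F.Path (root z) z := fun z => ((hrootr z).symm.some).toPath with hp
  have puniq : ∀ {u v : α} (q q' : F.Path u v), q = q' :=
    fun q q' => (SimpleGraph.isAcyclic_iff_path_unique.mp hforest) q q'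
  set enc : α → List α := fun z => (p z).1.support with henc
  have henclen : ∀ z, (enc z).length ≤ t := by
    intro z
    have h1 : (p z).1.length < t := SimpleGraph.Walk.IsPath.length_lt (p z).2
    have h2 : (p z).1.support.length = (p z).1.length + 1 := SimpleGraph.Walk.length_support _
    simp only [henc]
    omega
  have hencinj : Function.Injective enc := by
    intro z z' hzz
    have h1 : (enc z).getLast? = some z := support_getLast? (p z).1
    have h2 : (enc z').getLast? = some z' := support_getLast? (p z').1
    rw [hzz] at h1
    rw [h1] at h2
    exact Option.some_injective _ h2
  have hfemb_len : ∀ z, ((enc z).map idx).length ≤ t := by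
    intro z
    rw [List.length_map]
    exact henclen z
  set femb : α → TB t t := fun z => ⟨(enc z).map idx, hfemb_len z⟩ with hfemb
  have hfembinj : Function.Injective femb := by
    intro z z' hzz
    apply hencinj
    apply List.map_injective_iff.mpr idx.injective
    exact congrArg Subtype.val hzz
  refine ⟨⟨fun z => g (femb z), fun z z' hzz => hfembinj (ginj hzz)⟩, ?_⟩
  intro u w huw
  -- the key structural fact about the encodings of adjacent vertices
  have hru : root u = root w := hrooteq huw.reachable
  have key : enc w = enc u ++ [w] ∨ enc u = enc w ++ [u] := by
    by_cases hmem : w ∈ (p u).1.support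
    · right
      have hdrop_path : ((p u).1.dropUntil w hmem).IsPath := (p u).2.dropUntil hmem
      have hEpath : (SimpleGraph.Walk.cons huw.symm SimpleGraph.Walk.nil).IsPath := by
        rw [SimpleGraph.Walk.cons_isPath_iff]
        refine ⟨SimpleGraph.Walk.IsPath.nil, ?_⟩
        simp only [SimpleGraph.Walk.support_nil, List.mem_singleton]
        exact huw.ne'
      have hdE : (p u).1.dropUntil w hmem = SimpleGraph.Walk.cons huw.symm SimpleGraph.Walk.nil := by
        have := puniq ⟨(p u).1.dropUntil w hmem, hdrop_path⟩
          ⟨SimpleGraph.Walk.cons huw.symm SimpleGraph.Walk.nil, hEpath⟩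
        exact congrArg Subtype.val this
      have htk_path : ((p u).1.takeUntil w hmem).IsPath := (p u).2.takeUntil hmem
      have hQ := puniq (p w) ⟨((p u).1.takeUntil w hmem).copy hru rfl, by
        rw [SimpleGraph.Walk.isPath_copy]
        exact htk_path⟩
      have hsupw : enc w = ((p u).1.takeUntil w hmem).support := by
        simp only [henc]
        rw [hQ]
        exact SimpleGraph.Walk.support_copy _ hru rfl
      have hsupu : enc u = ((p u).1.takeUntil w hmem).support ++ [u] := by
        simp only [henc]
        conv_lhs => rw [← SimpleGraph.Walk.take_spec (p u).1 hmem]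
        rw [SimpleGraph.Walk.support_append, hdE]
        rfl
      rw [hsupw, hsupu]
    · left
      have hconc_path : ((p u).1.concat huw).IsPath := by
        rw [SimpleGraph.Walk.isPath_def, SimpleGraph.Walk.support_concat,
          List.nodup_append]
        refine ⟨(p u).2.support_nodup, List.nodup_singleton _, ?_⟩
        intro a ha b hb hab
        rw [List.mem_singleton] at hb
        subst hb
        subst hab
        exact hmem ha
      have hQ := puniq (p w) ⟨((p u).1.concat huw).copy hru rfl, by
        rw [SimpleGraph.Walk.isPath_copy]
        exact hconc_path⟩
      have hsupw : enc w = (p u).1.support ++ [w] := by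
        simp only [henc]
        rw [hQ]
        have h1 := SimpleGraph.Walk.support_copy ((p u).1.concat huw) hru rfl
        rw [h1, SimpleGraph.Walk.support_concat]
      exact hsupw
  have hmain : ∀ (z z' : α), enc z' = enc z ++ [z'] →
      (s(g (femb z), g (femb z')), c) ∈ h ∧ g (femb z) ≠ g (femb z') := by
    intro z z' hzz
    have hlen : ((enc z).map idx).length < t := by
      have h1 := henclen z'
      rw [hzz, List.length_append, List.length_singleton] at h1
      rw [List.length_map]
      omega
    have hmem := gedge ((enc z).map idx) hlen (idx z')
    have heq1 : (⟨(enc z).map idx, Nat.le_of_lt hlen⟩ : TB t t) = femb z := rfl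
    have heq2 : (⟨(enc z).map idx ++ [idx z'], by
        rw [List.length_append, List.length_singleton]
        exact hlen⟩ : TB t t) = femb z' := by
      apply Subtype.ext
      show (enc z).map idx ++ [idx z'] = (enc z').map idx
      rw [hzz, List.map_append]
      rfl
    rw [heq1, heq2] at hmem
    refine ⟨hmem, ?_⟩
    intro hcon
    have h5 := hfembinj (ginj hcon)
    have h6 : enc z = enc z' := congrArg enc h5
    rw [hzz] at h6
    simp at h6
  rcases key with hk | hk
  · exact hmain u w hk
  · obtain ⟨hm1, hm2⟩ := hmain w u hk
    rw [Sym2.eq_swap] at hm1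
    exact ⟨hm1, hm2.symm⟩

end S17

/-- Prop. 1 of Grytczuk–Kierstead–Prałat, as used in the paper. For every
forest `F` with at least one edge and every `r ≥ 2`, there is a tree size restriction `k` for
which Builder has a winning strategy in the deterministic `F`-avoidance game with `r`
colors. -/
theorem statement17 {α : Type} [Fintype α] (F : SimpleGraph α) (hforest : F.IsAcyclic)
    (hF : F.edgeSet.Nonempty) (r : ℕ) (hr : 2 ≤ r) :
    ∃ k : ℕ, BuilderWinsTree F r k := by
  classical
  have hα : Nonempty α := by
    obtain ⟨e0, he0⟩ := hF
    induction e0 with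
    | _ u w => exact ⟨u⟩
  have ht1 : 1 ≤ Fintype.card α := Fintype.card_pos
  have hr0 : 0 < r := by omega
  obtain ⟨s, hs⟩ := S17.qall (r := r) (b := Fintype.card α) hr0 (r * Fintype.card α + 1) 1
  refine ⟨Fintype.card (Sym2 (Fin s)), s, ?_⟩
  intro π
  obtain ⟨ext, P', Fr', v, x, S, hInv', hPP', hFr', hdisj', hcard', hsum, hSF, hVC, hSne⟩ :=
    hs s π [] ∅ Finset.univ S17.Inv.nil (by simp) (by simp)
  rw [List.nil_append] at hInv' hVC
  refine ⟨ext, ⟨hInv'.nodup, hInv'.nondiag⟩, ?_, ?_⟩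
  · intro i
    refine ⟨hInv'.acy i, ?_⟩
    intro Sset _
    unfold edgesWithin
    calc ((boardOf (ext.take i)).edgeSet ∩ {e | ∀ v ∈ e, v ∈ Sset}).ncard
        ≤ (Set.univ : Set (Sym2 (Fin s))).ncard :=
          Set.ncard_le_ncard (Set.subset_univ _) Set.finite_univ
      _ = Fintype.card (Sym2 (Fin s)) := by rw [Set.ncard_univ, Nat.card_eq_fintype_card]
  · have hvec := hsum 0
    have hex : ∃ c, Fintype.card α ≤ v 0 c := by
      by_contra hcon
      push_neg at hcon
      have hle : ∑ c, (v 0 c + 1) ≤ Finset.univ.card • Fintype.card α :=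
        Finset.sum_le_card_nsmul _ _ _ (fun c _ => by have := hcon c; omega)
      rw [Finset.sum_add_distrib, Finset.sum_const, Finset.card_univ, Fintype.card_fin,
        smul_eq_mul, smul_eq_mul, mul_one] at hle
      omega
    obtain ⟨c0, hc0⟩ := hex
    have hcert := ((hVC 0).2.2 c0).anti_d hc0
    obtain ⟨f, hf⟩ := S17.embed_of_cert hforest hcert
    refine ⟨c0, f, ?_⟩
    intro u w huw
    rw [colorGraph, SimpleGraph.fromEdgeSet_adj]
    exact ⟨(hf u w huw).1, (hf u w huw).2⟩
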